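/- arXiv:1412.1470 — 2 statements merged into one kernel-verified Lean document; each statement's English description precedes it below -/
import Mathlib

section
/- Let OT' be an occurrence tree of a pattern P' in a database tree T, let x ∈ V(T) \ V(OT'), and let y be the rightmost vertex of OT' (last vertex in preorder). Then RExtend(OT', x, y) is an occurrence tree in T if and only if y.scope.l < x.scope.l and x.scope.u ≤ y.scope.u. -/
open scoped Classical

/-- A rooted tree on vertices `Fin (n+1)`, given by its parent function.
The preorder numbering is the identity (this is imposed by `IsValid`). -/
structure PTree (n : ℕ) where
  parent : Fin (n + 1) → Fin (n + 1)

namespace PTree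

variable {n : ℕ}

/-- `t.Anc u v` : `u` is a proper ancestor of `v`. -/
def Anc (t : PTree n) : Fin (n + 1) → Fin (n + 1) → Prop :=
  Relation.TransGen (fun a b => a = t.parent b ∧ a ≠ b)

/-- The set of descendants of `v`, including `v` itself (the subtree rooted at `v`). -/
noncomputable def descSet (t : PTree n) (v : Fin (n + 1)) : Finset (Fin (n + 1)) :=
  Finset.univ.filter fun w => w = v ∨ t.Anc v w

/-- The number of vertices in the subtree rooted at `v`. -/
noncomputable def size (t : PTree n) (v : Fin (n + 1)) : ℕ := (t.descSet v).card

/-- The preorder number of the rightmost (last in preorder) descendant of `v`. -/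
noncomputable def scopeU (t : PTree n) (v : Fin (n + 1)) : ℕ :=
  (t.descSet v).sup fun w => (w : ℕ)

/-- The scope of a vertex: lower bound is its preorder number, upper bound the
preorder number of its rightmost descendant. -/
noncomputable def scope (t : PTree n) (v : Fin (n + 1)) : ℕ × ℕ :=
  ((v : ℕ), t.scopeU v)

/-- `t` is a rooted tree whose preorder numbering is the identity:
vertex `0` is the root, parents come strictly earlier, and the parent of the
next vertex in preorder is the previous vertex or one of its ancestors. -/
def IsValid (t : PTree n) : Prop :=
  t.parent 0 = 0 ∧
  (∀ v : Fin (n + 1), v ≠ 0 → t.parent v < v) ∧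
  (∀ (v : Fin (n + 1)) (h : (v : ℕ) + 1 < n + 1),
    t.parent ⟨(v : ℕ) + 1, h⟩ = v ∨ t.Anc (t.parent ⟨(v : ℕ) + 1, h⟩) v)

/-- `v` lies on the rightmost path of `t` (the path from the root to the last
vertex in preorder). -/
def OnRMP (t : PTree n) (v : Fin (n + 1)) : Prop :=
  v = Fin.last n ∨ t.Anc v (Fin.last n)

/-- Rightmost path extension: attach a new vertex (the new last vertex in
preorder) as the rightmost child of `u`. -/
def extendP (t : PTree n) (u : Fin (n + 1)) : PTree (n + 1) where
  parent v := if h : (v : ℕ) < n + 1 then (t.parent ⟨(v : ℕ), h⟩).castSucc else u.castSucc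

end PTree

/-- A rooted ordered labeled tree. -/
structure LTree (n : ℕ) extends PTree n where
  label : Fin (n + 1) → ℕ

namespace LTree

variable {m n : ℕ}

def IsValid (t : LTree n) : Prop := t.toPTree.IsValid

/-- Subtree homeomorphism (embedding) of a pattern `P` into a database tree `T`:
injective, preorder-order preserving (preorder numbers being the identity),
label preserving, and mapping each edge to an ancestor-descendant pair. -/
def IsEmb (P : LTree m) (T : LTree n) (φ : Fin (m + 1) → Fin (n + 1)) : Prop :=
  StrictMono φ ∧ (∀ v, T.label (φ v) = P.label v) ∧
  (∀ v : Fin (m + 1), v ≠ 0 → T.toPTree.Anc (φ (P.parent v)) (φ v))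

/-- Rightmost path extension of a labeled tree: the new vertex gets label `a`. -/
def extendL (t : LTree m) (u : Fin (m + 1)) (a : ℕ) : LTree (m + 1) where
  toPTree := t.toPTree.extendP u
  label v := if h : (v : ℕ) < m + 1 then t.label ⟨(v : ℕ), h⟩ else a

end LTree

/-- Extension of an embedding: the new (last) pattern vertex is mapped to `x`. -/
def extendMap {m n : ℕ} (φ : Fin (m + 1) → Fin (n + 1)) (x : Fin (n + 1)) :
    Fin (m + 2) → Fin (n + 1) :=
  fun v => if h : (v : ℕ) < m + 1 then φ ⟨(v : ℕ), h⟩ else x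

/-- `RExtend(OT', x, y)` (with `y = φ' u`) is an occurrence tree in `T`, i.e. the
extended map is an embedding of the rightmost path extension of `P'` (whose new
vertex carries the label of `x`). -/
def ExtIsOccTree {m n : ℕ} (P' : LTree m) (T : LTree n)
    (φ' : Fin (m + 1) → Fin (n + 1)) (u : Fin (m + 1)) (x : Fin (n + 1)) : Prop :=
  LTree.IsEmb (P'.extendL u (T.label x)) T (extendMap φ' x)

namespace PTree

variable {n : ℕ}

lemma step_lt {t : PTree n} (ht : t.IsValid) {a b : Fin (n + 1)}
    (h : a = t.parent b ∧ a ≠ b) : a < b := by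
  rcases h with ⟨h1, h2⟩
  rcases eq_or_ne b 0 with hb | hb
  · subst hb; rw [ht.1] at h1; exact absurd h1 h2
  · exact h1 ▸ ht.2.1 b hb

lemma anc_lt {t : PTree n} (ht : t.IsValid) {a b : Fin (n + 1)} (h : t.Anc a b) : a < b := by
  induction h with
  | single h => exact step_lt ht h
  | tail _ h2 ih => exact lt_trans ih (step_lt ht h2)

lemma anc_trans {t : PTree n} {a b c : Fin (n + 1)} (h1 : t.Anc a b) (h2 : t.Anc b c) :
    t.Anc a c := Relation.TransGen.trans h1 h2

/-- Interval (contiguity) lemma: if `v` is an ancestor-or-equal of `d` and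
`v ≤ w ≤ d`, then `v` is an ancestor-or-equal of `w`. -/
lemma anc_of_between {t : PTree n} (ht : t.IsValid) :
    ∀ (k : ℕ) (d w v : Fin (n + 1)), (d : ℕ) = k → (v = d ∨ t.Anc v d) →
      v ≤ w → w ≤ d → (v = w ∨ t.Anc v w) := by
  intro k
  induction k using Nat.strong_induction_on with
  | _ k ih =>
    intro d w v hdk hvd hvw hwd
    rcases eq_or_lt_of_le hwd with h | h
    · exact h ▸ hvd
    have hd0 : (d : ℕ) ≠ 0 := by
      have : (w : ℕ) < (d : ℕ) := h
      omega
    obtain ⟨c, hc⟩ : ∃ c, (d : ℕ) = c + 1 := ⟨(d : ℕ) - 1, by omega⟩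
    have hc1 : c + 1 < n + 1 := by have := d.isLt; omega
    have hcn : c < n + 1 := by omega
    set prev : Fin (n + 1) := ⟨c, hcn⟩ with hprev
    have hd : d = ⟨c + 1, hc1⟩ := by apply Fin.ext; simp [hc]
    have hval := ht.2.2 prev (show (prev : ℕ) + 1 < n + 1 from hc1)
    have hpd : t.parent d = prev ∨ t.Anc (t.parent d) prev := by
      rw [hd]; exact hval
    have hanc : t.Anc v d := by
      rcases hvd with rfl | hvd
      · exact absurd hvw (not_le.mpr h)
      · exact hvd
    have hdec : (v = t.parent d ∧ v ≠ d) ∨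
        ∃ b, t.Anc v b ∧ (b = t.parent d ∧ b ≠ d) := by
      rcases (Relation.transGen_iff _ _ _).mp hanc with h' | ⟨b, hb1, hb2⟩
      · exact Or.inl h'
      · exact Or.inr ⟨b, hb1, hb2⟩
    have hvprev : v = prev ∨ t.Anc v prev := by
      rcases hdec with ⟨hv1, _⟩ | ⟨b, hb1, hb2, _⟩
      · rcases hpd with hp | hp
        · exact Or.inl (hv1.trans hp)
        · exact Or.inr (hv1 ▸ hp)
      · rcases hpd with hp | hp
        · exact Or.inr (hp ▸ hb2 ▸ hb1)
        · exact Or.inr (anc_trans (hb2 ▸ hb1) hp)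
    have hwprev : w ≤ prev := by
      have h1 : (w : ℕ) < (d : ℕ) := h
      show (w : ℕ) ≤ (prev : ℕ)
      simp only [hprev]
      omega
    exact ih c (by omega) prev w v rfl hvprev hvw hwprev

lemma mem_descSet_self (t : PTree n) (v : Fin (n + 1)) : v ∈ t.descSet v := by
  simp [descSet]

lemma le_scopeU (t : PTree n) (v : Fin (n + 1)) : (v : ℕ) ≤ t.scopeU v :=
  Finset.le_sup (mem_descSet_self t v)

lemma scopeU_le_of_anc {t : PTree n} {a b : Fin (n + 1)} (h : t.Anc a b) :
    t.scopeU b ≤ t.scopeU a := by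
  apply Finset.sup_mono
  intro w hw
  simp only [descSet, Finset.mem_filter, Finset.mem_univ, true_and] at hw ⊢
  rcases hw with rfl | hw
  · exact Or.inr h
  · exact Or.inr (anc_trans h hw)

/-- Key scope characterization: if `a < b` and `(b : ℕ) ≤ scopeU a`, then
`a` is a proper ancestor of `b`. -/
lemma anc_of_scope {t : PTree n} (ht : t.IsValid) {a b : Fin (n + 1)}
    (hab : a < b) (hb : (b : ℕ) ≤ t.scopeU a) : t.Anc a b := by
  obtain ⟨d, hd, hde⟩ := Finset.exists_mem_eq_sup (t.descSet a) ⟨a, mem_descSet_self t a⟩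
    (fun w => (w : ℕ))
  have hbd : b ≤ d := by
    show (b : ℕ) ≤ (d : ℕ)
    have : t.scopeU a = (d : ℕ) := hde
    omega
  have hmem : a = d ∨ t.Anc a d := by
    have h' : d = a ∨ t.Anc a d := by simpa [descSet] using hd
    rcases h' with h' | h'
    exacts [Or.inl h'.symm, Or.inr h']
  have hres := anc_of_between ht (d : ℕ) d b a rfl hmem (le_of_lt hab) hbd
  rcases hres with rfl | h
  · exact absurd hab (lt_irrefl a)
  · exact h

end PTree

/-- Proposition 4: let `OT'` be the occurrence tree of an embedding `φ'` of `P'`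
into `T`, `x ∈ V(T) \ V(OT')`, and `y = φ'(last)` the rightmost vertex of `OT'`
(last in preorder). Then `RExtend(OT', x, y)` is an occurrence tree in `T` iff
`y.scope.l < x.scope.l` and `x.scope.u ≤ y.scope.u`. -/
theorem stmt8 {m n : ℕ} (P' : LTree m) (T : LTree n) (hP : P'.IsValid) (hT : T.IsValid)
    (φ' : Fin (m + 1) → Fin (n + 1)) (hφ : LTree.IsEmb P' T φ')
    (x : Fin (n + 1)) (hx : x ∉ Set.range φ') :
    ExtIsOccTree P' T φ' (Fin.last m) x ↔
      ((φ' (Fin.last m) : ℕ) < (x : ℕ) ∧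
        T.toPTree.scopeU x ≤ T.toPTree.scopeU (φ' (Fin.last m))) := by
  set y := φ' (Fin.last m) with hy
  have hTv : T.toPTree.IsValid := hT
  constructor
  · rintro ⟨hmono, hlab, hanc⟩
    -- y < x from monotonicity
    have h1 : ((Fin.last m).castSucc : Fin (m + 2)) < Fin.last (m + 1) := by
      simp [Fin.lt_def]
    have hlt := hmono h1
    have e1 : extendMap φ' x (Fin.last m).castSucc = y := by
      simp only [extendMap, Fin.coe_castSucc, Fin.val_last]
      rw [dif_pos (Nat.lt_succ_self m)]
      rfl
    have e2 : extendMap φ' x (Fin.last (m + 1)) = x :=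
      dif_neg (by simp)
    rw [e1, e2] at hlt
    refine ⟨hlt, ?_⟩
    -- ancestor condition at the last vertex
    have hlast0 : (Fin.last (m + 1)) ≠ (0 : Fin (m + 2)) := by
      simp [Fin.ext_iff]
    have ha := hanc (Fin.last (m + 1)) hlast0
    have ep : (P'.extendL (Fin.last m) (T.label x)).parent (Fin.last (m + 1)) =
        (Fin.last m).castSucc :=
      dif_neg (by simp)
    rw [ep, e1, e2] at ha
    exact PTree.scopeU_le_of_anc ha
  · rintro ⟨hlt, hsc⟩
    have hyx : y < x := by exact_mod_cast hlt
    have hancyx : T.toPTree.Anc y x := by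
      apply PTree.anc_of_scope hTv hyx
      exact le_trans (PTree.le_scopeU _ x) hsc
    refine ⟨?_, ?_, ?_⟩
    · -- strict mono
      intro v w hvw
      have hvw' : (v : ℕ) < (w : ℕ) := hvw
      show extendMap φ' x v < extendMap φ' x w
      by_cases hw : (w : ℕ) < m + 1
      · have hv : (v : ℕ) < m + 1 := lt_trans hvw' hw
        rw [show extendMap φ' x v = φ' ⟨(v : ℕ), hv⟩ from dif_pos hv,
          show extendMap φ' x w = φ' ⟨(w : ℕ), hw⟩ from dif_pos hw]
        exact hφ.1 (show ((⟨(v : ℕ), hv⟩ : Fin (m + 1)) < ⟨(w : ℕ), hw⟩) from hvw')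
      · have hv : (v : ℕ) < m + 1 := by
          have := w.isLt; omega
        rw [show extendMap φ' x v = φ' ⟨(v : ℕ), hv⟩ from dif_pos hv,
          show extendMap φ' x w = x from dif_neg hw]
        calc φ' ⟨(v : ℕ), hv⟩ ≤ y := hφ.1.monotone (Fin.le_last _)
          _ < x := hyx
    · -- labels
      intro v
      by_cases hv : (v : ℕ) < m + 1
      · have e4 : extendMap φ' x v = φ' ⟨(v : ℕ), hv⟩ := dif_pos hv
        have e5 : (P'.extendL (Fin.last m) (T.label x)).label v = P'.label ⟨(v : ℕ), hv⟩ :=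
          dif_pos hv
        rw [e4, e5]; exact hφ.2.1 _
      · have e4 : extendMap φ' x v = x := dif_neg hv
        have e5 : (P'.extendL (Fin.last m) (T.label x)).label v = T.label x := dif_neg hv
        rw [e4, e5]
    · -- ancestors
      intro v hv0
      by_cases hv : (v : ℕ) < m + 1
      · have ep : (P'.extendL (Fin.last m) (T.label x)).parent v =
            (P'.parent ⟨(v : ℕ), hv⟩).castSucc :=
          dif_pos hv
        rw [ep]
        have e3 : extendMap φ' x (P'.parent ⟨(v : ℕ), hv⟩).castSucc =
            φ' (P'.parent ⟨(v : ℕ), hv⟩) :=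
          dif_pos (P'.parent ⟨(v : ℕ), hv⟩).isLt
        have e4 : extendMap φ' x v = φ' ⟨(v : ℕ), hv⟩ :=
          dif_pos hv
        rw [e3, e4]
        exact hφ.2.2 ⟨(v : ℕ), hv⟩ (fun h => hv0 (Fin.ext (by have h' := congrArg Fin.val h; simp only [Fin.val_zero] at h' ⊢; exact h')))
      · have hvlast : v = Fin.last (m + 1) := by
          have := v.isLt
          apply Fin.ext; simp; omega
        subst hvlast
        have ep : (P'.extendL (Fin.last m) (T.label x)).parent (Fin.last (m + 1)) =
            (Fin.last m).castSucc :=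
          dif_neg (by simp)
        rw [ep]
        have e1 : extendMap φ' x (Fin.last m).castSucc = y := by
          simp only [extendMap, Fin.coe_castSucc, Fin.val_last]
          rw [dif_pos (Nat.lt_succ_self m)]
          rfl
        have e2 : extendMap φ' x (Fin.last (m + 1)) = x :=
          dif_neg (by simp)
        rw [e1, e2]
        exact hancyx
end

section
/- Per-occurrence support of tree patterns is not anti-monotone: there exist a database tree T, a minimum support threshold (namely 2), and rooted ordered labeled tree patterns P1, P2 with P1 a subtree of P2 (P2 a rightmost path extension of P1), such that the number of subtree-homeomorphic embeddings of P2 into T is at least 2 while the number of embeddings of P1 into T is less than 2. -/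
open scoped Classical

/-- The database tree: root labeled 1 with two children labeled 2. -/
noncomputable def Tw : LTree 2 where
  parent := fun _ => 0
  label := fun v => if v = 0 then 1 else 2

/-- The pattern: a single vertex labeled 1. -/
noncomputable def Pw : LTree 0 where
  parent := fun _ => 0
  label := fun _ => 1

lemma Tw_anc (v : Fin 3) (hv : v ≠ 0) : Tw.toPTree.Anc 0 v :=
  Relation.TransGen.single ⟨rfl, fun h => hv h.symm⟩

/-- Per-occurrence support is not anti-monotone: there are a database tree `T`, a
threshold `2`, and patterns `P1`, `P2` with `P2` a rightmost path extension of
`P1`, such that `P2` has at least `2` subtree-homeomorphic embeddings into `T`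
while `P1` has fewer than `2`. -/

theorem stmt12 :
    ∃ (n m : ℕ) (T : LTree n) (P1 : LTree m) (u : Fin (m + 1)) (a : ℕ),
      T.IsValid ∧ P1.IsValid ∧ P1.toPTree.OnRMP u ∧
      2 ≤ Nat.card {φ : Fin (m + 2) → Fin (n + 1) //
            LTree.IsEmb (P1.extendL u a) T φ} ∧
      Nat.card {φ : Fin (m + 1) → Fin (n + 1) // LTree.IsEmb P1 T φ} < 2 := by
  refine ⟨2, 0, Tw, Pw, 0, 2, ?_, ?_, ?_, ?_, ?_⟩
  · refine ⟨rfl, fun v hv => Fin.pos_of_ne_zero hv, fun v h => ?_⟩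
    rcases eq_or_ne v 0 with rfl | hv
    · exact Or.inl rfl
    · exact Or.inr (Tw_anc v hv)
  · exact ⟨rfl, fun v hv => absurd (Fin.eq_zero v) hv, fun v h => absurd h (by rw [Fin.eq_zero v]; omega)⟩
  · exact Or.inl (Fin.eq_zero _).symm
  · have h1 : LTree.IsEmb (Pw.extendL 0 2) Tw ![0, 1] := by
      refine ⟨?_, ?_, ?_⟩
      · intro a b hab; fin_cases a <;> fin_cases b <;> simp_all
      · intro v; fin_cases v <;> rfl
      · intro v hv
        fin_cases v
        · exact absurd rfl hv
        · exact Tw_anc 1 (by decide)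
    have h2 : LTree.IsEmb (Pw.extendL 0 2) Tw ![0, 2] := by
      refine ⟨?_, ?_, ?_⟩
      · intro a b hab; fin_cases a <;> fin_cases b <;> simp_all
      · intro v; fin_cases v <;> rfl
      · intro v hv
        fin_cases v
        · exact absurd rfl hv
        · exact Tw_anc 2 (by decide)
    have hne : (⟨![0,1], h1⟩ : {φ : Fin 2 → Fin 3 // LTree.IsEmb (Pw.extendL 0 2) Tw φ}) ≠ ⟨![0,2], h2⟩ := by
      intro h
      have := congrArg (fun s => s.1 1) h
      simp at this
    rw [Nat.card_eq_fintype_card]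
    exact Fintype.one_lt_card_iff_nontrivial.2 ⟨_, _, hne⟩
  · have hle : Nat.card {φ : Fin 1 → Fin 3 // LTree.IsEmb Pw Tw φ} ≤ 1 := by
      have hsub : Subsingleton {φ : Fin 1 → Fin 3 // LTree.IsEmb Pw Tw φ} := by
        constructor
        rintro ⟨φ, hφ⟩ ⟨ψ, hψ⟩
        obtain ⟨-, hl, -⟩ := hφ
        obtain ⟨-, hl', -⟩ := hψ
        have key : ∀ (χ : Fin 1 → Fin 3), (∀ v, Tw.label (χ v) = Pw.label v) → χ 0 = 0 := by
          intro χ hχ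
          by_contra h
          have := hχ 0
          simp only [Tw, Pw, if_neg h] at this
          omega
        apply Subtype.ext
        funext v
        show φ v = ψ v
        rw [Fin.eq_zero v, key φ hl, key ψ hl']
      rw [Nat.card_eq_fintype_card]
      exact Fintype.card_le_one_iff_subsingleton.2 hsub
    exact lt_of_le_of_lt hle one_lt_two
end
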